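/- arXiv:1412.6022 — 2 statements merged into one kernel-verified Lean document; each statement's English description precedes it below -/
import Mathlib

section
/- If f : ℝ → ℝ is continuous, f(u) = o(u) as |u| → 0, f(u)/|u| is non-decreasing on (-∞,0) and on (0,∞), and F(u) = ∫₀ᵘ f(t) dt, then f(u)·u ≥ 2·F(u) ≥ 0 for all u ∈ ℝ. -/
open MeasureTheory

theorem stmt0 (f : ℝ → ℝ) (hf : Continuous f)
    (hsmall : ∀ ε > (0:ℝ), ∃ δ > (0:ℝ), ∀ u : ℝ, |u| < δ → |f u| ≤ ε * |u|)
    (hmono_neg : ∀ u v : ℝ, u ≤ v → v < 0 → f u / |u| ≤ f v / |v|)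
    (hmono_pos : ∀ u v : ℝ, 0 < u → u ≤ v → f u / |u| ≤ f v / |v|)
    (F : ℝ → ℝ) (hF : ∀ u : ℝ, F u = ∫ t in (0:ℝ)..u, f t) :
    ∀ u : ℝ, 2 * F u ≤ f u * u ∧ 0 ≤ F u := by
  have hf0 : f 0 = 0 := by
    obtain ⟨δ, hδ, h⟩ := hsmall 1 one_pos
    have := h 0 (by simpa using hδ)
    simpa [abs_nonpos_iff] using this
  have hpos : ∀ t : ℝ, 0 < t → 0 ≤ f t := by
    intro t ht
    by_contra hneg
    push_neg at hneg
    have htne : t ≠ 0 := ne_of_gt ht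
    set ε : ℝ := -f t / (2 * t) with hε
    have hε0 : 0 < ε := div_pos (by linarith) (by linarith)
    obtain ⟨δ, hδ, h⟩ := hsmall ε hε0
    set s : ℝ := min δ t / 2 with hs
    have hs0 : 0 < s := by
      have : 0 < min δ t := lt_min hδ ht
      simp only [hs]; linarith
    have hsδ : s < δ := by
      have : min δ t ≤ δ := min_le_left _ _
      simp only [hs]; linarith
    have hst : s ≤ t := by
      have : min δ t ≤ t := min_le_right _ _
      simp only [hs]; linarith
    have hm := hmono_pos s t hs0 hst
    rw [abs_of_pos hs0, abs_of_pos ht, div_le_div_iff₀ hs0 ht] at hm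
    -- hm : f s * t ≤ f t * s
    have hfsneg : f s < 0 := by nlinarith
    have hb := h s (by rwa [abs_of_pos hs0])
    rw [abs_of_neg hfsneg, abs_of_pos hs0] at hb
    -- hb : -f s ≤ ε * s
    have hb2 : (-f s) * t ≤ ε * s * t := mul_le_mul_of_nonneg_right hb ht.le
    have he : ε * s * t = -f t * s / 2 := by
      rw [hε]; field_simp
    rw [he] at hb2
    nlinarith
  have hneg : ∀ t : ℝ, t < 0 → f t ≤ 0 := by
    intro t ht
    by_contra hpos'
    push_neg at hpos'
    have hnt : (0:ℝ) < -t := by linarith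
    have htne : t ≠ 0 := ne_of_lt ht
    set ε : ℝ := f t / (2 * (-t)) with hε
    have hε0 : 0 < ε := div_pos hpos' (by linarith)
    obtain ⟨δ, hδ, h⟩ := hsmall ε hε0
    have hmin : 0 < min δ (-t) := lt_min hδ hnt
    set s : ℝ := -(min δ (-t) / 2) with hs
    have hs0 : s < 0 := by simp only [hs]; linarith
    have hns : (0:ℝ) < -s := by linarith
    have hsδ : |s| < δ := by
      rw [abs_of_neg hs0]
      have : min δ (-t) ≤ δ := min_le_left _ _
      simp only [hs]; linarith
    have hts : t ≤ s := by
      have : min δ (-t) ≤ -t := min_le_right _ _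
      simp only [hs]; linarith
    have hm := hmono_neg t s hts hs0
    rw [abs_of_neg hs0, abs_of_neg ht, div_le_div_iff₀ hnt hns] at hm
    -- hm : f t * -s ≤ f s * -t
    have hfspos : 0 < f s := by nlinarith
    have hb := h s hsδ
    rw [abs_of_pos hfspos, abs_of_neg hs0] at hb
    -- hb : f s ≤ ε * -s
    have hb2 : f s * (-t) ≤ ε * (-s) * (-t) := mul_le_mul_of_nonneg_right hb hnt.le
    have he : ε * (-s) * (-t) = f t * (-s) / 2 := by
      rw [hε]; field_simp
    rw [he] at hb2
    have hlt : f t * -s ≤ f t * -s / 2 := le_trans hm hb2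
    have hx : 0 < f t * -s := mul_pos hpos' hns
    linarith
  have hint : ∀ a b : ℝ, IntervalIntegrable f volume a b :=
    fun a b => hf.intervalIntegrable a b
  intro u
  rcases lt_trichotomy u 0 with hu | hu | hu
  · have hune : u ≠ 0 := ne_of_lt hu
    have hfu : f u ≤ 0 := hneg u hu
    have hc : 0 ≤ f u / u := by
      rw [div_nonneg_iff]; right; exact ⟨hfu, hu.le⟩
    have hpt : ∀ t ∈ Set.Icc u 0, (f u / u) * t ≤ f t := by
      rintro t ⟨htu, ht0⟩
      rcases eq_or_lt_of_le ht0 with h0 | h0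
      · simp [h0, hf0]
      · have hm := hmono_neg u t htu h0
        rw [abs_of_neg hu, abs_of_neg h0,
          div_le_div_iff₀ (by linarith) (by linarith)] at hm
        rw [div_mul_eq_mul_div, div_le_iff_of_neg hu]
        nlinarith
    have hI : ∫ t in u..(0:ℝ), (f u / u) * t ≤ ∫ t in u..(0:ℝ), f t := by
      apply intervalIntegral.integral_mono_on hu.le _ (hint u 0) hpt
      exact (continuous_const.mul continuous_id).intervalIntegrable u 0
    have hval : ∫ t in u..(0:ℝ), (f u / u) * t = -(f u * u) / 2 := by
      rw [intervalIntegral.integral_const_mul, integral_id]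
      field_simp
      ring
    have hFu : F u = -∫ t in u..(0:ℝ), f t := by
      rw [hF u, intervalIntegral.integral_symm]
    constructor
    · rw [hFu]; rw [hval] at hI; linarith
    · rw [hFu]
      have h2 : ∫ t in u..(0:ℝ), f t ≤ ∫ t in u..(0:ℝ), (0:ℝ) := by
        apply intervalIntegral.integral_mono_on hu.le (hint u 0) intervalIntegrable_const
        rintro t ⟨htu, ht0⟩
        rcases eq_or_lt_of_le ht0 with h0 | h0
        · simp [h0, hf0]
        · exact hneg t h0
      simp only [intervalIntegral.integral_zero] at h2
      linarith
  · simp [hu, hF, hf0]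
  · have hune : u ≠ 0 := ne_of_gt hu
    have hc : 0 ≤ f u / u := div_nonneg (hpos u hu) hu.le
    have hpt : ∀ t ∈ Set.Icc (0:ℝ) u, f t ≤ (f u / u) * t := by
      rintro t ⟨ht0, htu⟩
      rcases eq_or_lt_of_le ht0 with h0 | h0
      · simp [← h0, hf0]
      · have hm := hmono_pos t u h0 htu
        rw [abs_of_pos h0, abs_of_pos hu, div_le_div_iff₀ h0 hu] at hm
        rw [div_mul_eq_mul_div, le_div_iff₀ hu]
        nlinarith
    have hI : ∫ t in (0:ℝ)..u, f t ≤ ∫ t in (0:ℝ)..u, (f u / u) * t := by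
      apply intervalIntegral.integral_mono_on hu.le (hint 0 u) _ hpt
      exact (continuous_const.mul continuous_id).intervalIntegrable 0 u
    have hval : ∫ t in (0:ℝ)..u, (f u / u) * t = f u * u / 2 := by
      rw [intervalIntegral.integral_const_mul, integral_id]
      field_simp
      ring
    constructor
    · rw [hF u]; rw [hval] at hI; linarith
    · rw [hF u]
      have h2 : ∫ t in (0:ℝ)..u, (0:ℝ) ≤ ∫ t in (0:ℝ)..u, f t := by
        apply intervalIntegral.integral_mono_on hu.le intervalIntegrable_const (hint 0 u)
        rintro t ⟨ht0, htu⟩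
        rcases eq_or_lt_of_le ht0 with h0 | h0
        · simp [← h0, hf0]
        · exact hpos t h0
      simpa using h2
end

section
/- Let f : ℝ → ℝ be continuous with f(u)u ≥ 2F(u) ≥ 0 for all u (F the primitive of f), f(u) = o(u) at 0, u ↦ f(u)/|u| non-decreasing on (-∞,0) and (0,∞), and F(u)/u² → ∞ as |u| → ∞. Fix u ≠ 0 and v ∈ ℝ, and define φ(t) := f(u)((t²−1)/2 · u + t v) + F(u) − F(tu + v) for t ≥ 0. Then φ(t) ≤ 0 for all t ≥ 0. -/
open MeasureTheory

lemma key_ineq (f : ℝ → ℝ) (hf : Continuous f)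
    (F : ℝ → ℝ) (hF : ∀ s : ℝ, F s = ∫ t in (0:ℝ)..s, f t)
    (hmono_neg : ∀ s r : ℝ, s ≤ r → r < 0 → f s / |s| ≤ f r / |r|)
    (hmono_pos : ∀ s r : ℝ, 0 < s → s ≤ r → f s / |s| ≤ f r / |r|)
    (u w : ℝ) (hu : u ≠ 0) (hsame : 0 < u * w) :
    f u / u * ((w ^ 2 - u ^ 2) / 2) ≤ F w - F u := by
  have hIw : IntervalIntegrable f volume 0 w := hf.intervalIntegrable 0 w
  have hIu : IntervalIntegrable f volume 0 u := hf.intervalIntegrable 0 u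
  have hint : F w - F u = ∫ s in u..w, f s := by
    rw [hF, hF]
    exact (intervalIntegral.integral_interval_sub_left hIw hIu)
  have hIc : ∀ a b : ℝ, IntervalIntegrable (fun s => f u / u * s) volume a b :=
    fun a b => (continuous_const.mul continuous_id).intervalIntegrable a b
  have hIf : ∀ a b : ℝ, IntervalIntegrable f volume a b :=
    fun a b => hf.intervalIntegrable a b
  have hlin : ∀ a b : ℝ, (∫ s in a..b, f u / u * s) = f u / u * ((b ^ 2 - a ^ 2) / 2) := by
    intro a b
    rw [intervalIntegral.integral_const_mul, integral_id]
  -- pointwise comparisons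
  rcases lt_or_gt_of_ne hu with hun | hup
  · -- u < 0, hence w < 0
    have hwn : w < 0 := by nlinarith
    rcases le_total u w with h | h
    · -- u ≤ w < 0 : f u / u * x ≤ f x on [u, w]
      have hpt : ∀ x ∈ Set.Icc u w, f u / u * x ≤ f x := by
        intro x hx
        have hx0 : x < 0 := lt_of_le_of_lt hx.2 hwn
        have hm := hmono_neg u x hx.1 hx0
        rw [abs_of_neg hun, abs_of_neg hx0] at hm
        have h1 : f x / x ≤ f u / u := by
          rw [div_neg, div_neg] at hm; linarith
        have h2 : f u / u * x ≤ f x / x * x :=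
          mul_le_mul_of_nonpos_right h1 (le_of_lt hx0)
        rwa [div_mul_cancel₀ _ (ne_of_lt hx0)] at h2
      have := intervalIntegral.integral_mono_on h
        (hIc u w) (hIf u w) hpt
      rw [hlin u w] at this
      linarith [hint ▸ this]
    · -- w ≤ u < 0 : f x ≤ f u / u * x on [w, u]
      have hpt : ∀ x ∈ Set.Icc w u, f x ≤ f u / u * x := by
        intro x hx
        have hx0 : x < 0 := lt_of_le_of_lt hx.2 hun
        have hm := hmono_neg x u hx.2 hun
        rw [abs_of_neg hun, abs_of_neg hx0] at hm
        have h1 : f u / u ≤ f x / x := by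
          rw [div_neg, div_neg] at hm; linarith
        have h2 : f u / u * x ≥ f x / x * x :=
          mul_le_mul_of_nonpos_right h1 (le_of_lt hx0)
        rwa [div_mul_cancel₀ _ (ne_of_lt hx0)] at h2
      have hmono := intervalIntegral.integral_mono_on h
        (hIf w u) (hIc w u) hpt
      rw [hlin w u] at hmono
      have hsymm : (∫ s in u..w, f s) = -(∫ s in w..u, f s) :=
        intervalIntegral.integral_symm w u
      rw [hint, hsymm]
      linarith
  · -- 0 < u, hence 0 < w
    have hwp : 0 < w := by nlinarith
    rcases le_total u w with h | h
    · have hpt : ∀ x ∈ Set.Icc u w, f u / u * x ≤ f x := by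
        intro x hx
        have hx0 : 0 < x := lt_of_lt_of_le hup hx.1
        have hm := hmono_pos u x hup hx.1
        rw [abs_of_pos hup, abs_of_pos hx0] at hm
        have h2 : f u / u * x ≤ f x / x * x :=
          mul_le_mul_of_nonneg_right hm (le_of_lt hx0)
        rwa [div_mul_cancel₀ _ (ne_of_gt hx0)] at h2
      have := intervalIntegral.integral_mono_on h
        (hIc u w) (hIf u w) hpt
      rw [hlin u w] at this
      linarith [hint ▸ this]
    · have hpt : ∀ x ∈ Set.Icc w u, f x ≤ f u / u * x := by
        intro x hx
        have hx0 : 0 < x := lt_of_lt_of_le hwp hx.1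
        have hm := hmono_pos x u hx0 hx.2
        rw [abs_of_pos hup, abs_of_pos hx0] at hm
        have h2 : f x / x * x ≤ f u / u * x :=
          mul_le_mul_of_nonneg_right hm (le_of_lt hx0)
        rwa [div_mul_cancel₀ _ (ne_of_gt hx0)] at h2
      have hmono := intervalIntegral.integral_mono_on h
        (hIf w u) (hIc w u) hpt
      rw [hlin w u] at hmono
      have hsymm : (∫ s in u..w, f s) = -(∫ s in w..u, f s) :=
        intervalIntegral.integral_symm w u
      rw [hint, hsymm]
      linarith

theorem stmt8 (f : ℝ → ℝ) (hf : Continuous f)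
    (F : ℝ → ℝ) (hF : ∀ s : ℝ, F s = ∫ t in (0:ℝ)..s, f t)
    (hAR : ∀ s : ℝ, 2 * F s ≤ f s * s ∧ 0 ≤ F s)
    (hsmall : ∀ ε > (0:ℝ), ∃ δ > (0:ℝ), ∀ s : ℝ, |s| < δ → |f s| ≤ ε * |s|)
    (hmono_neg : ∀ s r : ℝ, s ≤ r → r < 0 → f s / |s| ≤ f r / |r|)
    (hmono_pos : ∀ s r : ℝ, 0 < s → s ≤ r → f s / |s| ≤ f r / |r|)
    (hsuper : ∀ M : ℝ, ∃ R : ℝ, ∀ s : ℝ, R ≤ |s| → M ≤ F s / s ^ 2)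
    (u v : ℝ) (hu : u ≠ 0) :
    ∀ t : ℝ, 0 ≤ t →
      f u * ((t ^ 2 - 1) / 2 * u + t * v) + F u - F (t * u + v) ≤ 0 := by
  intro t ht
  have hARu := hAR u
  have hARw := hAR (t * u + v)
  have hfuu : 0 ≤ f u * u := le_trans (by linarith [hARu.2]) hARu.1
  by_cases hsame : 0 < u * (t * u + v)
  · -- same sign: use the key integral inequality
    have hkey := key_ineq f hf F hF hmono_neg hmono_pos u (t * u + v) hu hsame
    have hc : 0 ≤ f u / u := by
      have : f u / u = f u * u / u ^ 2 := by field_simp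
      rw [this]
      positivity
    have hfu : f u = f u / u * u := by field_simp
    rw [hfu]
    nlinarith [hkey, mul_nonneg hc (sq_nonneg v)]
  · -- opposite signs (or w = 0): u * w ≤ 0
    push_neg at hsame
    have ha : f u * (t * u + v) * t ≤ 0 := by
      rcases lt_or_gt_of_ne hu with hun | hup
      · have hfun : f u ≤ 0 := by nlinarith
        have hwn : 0 ≤ t * u + v := by nlinarith
        nlinarith [mul_nonneg hwn ht]
      · have hfup : 0 ≤ f u := by nlinarith
        have hwn : t * u + v ≤ 0 := by nlinarith
        nlinarith [mul_nonneg hfup ht]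
    have hd : 0 ≤ f u * u * t ^ 2 := mul_nonneg hfuu (sq_nonneg t)
    nlinarith [hARu.1, hARw.2, ha, hd]
end
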